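/- For a vertex v in a finite graph with r(v) ≥ 2 and for any d ≥ 0, if L = f_d(v) − γ̃_{d+1}(v) + (d+2)·(r(v) − n_d(v)) > 0, then the generalized closeness c(v) = (r(v)−1)²/((n−1)·f(v)) satisfies c(v) ≤ (r(v)−1)²/((n−1)·L). -/

import Mathlib

open Finset

variable {V : Type*}

/-- `steps r n v w` : there is a walk of length `n` from `v` to `w` along relation `r`. -/
def steps (r : V → V → Prop) : ℕ → V → V → Prop
  | 0, v, w => v = w
  | n+1, v, w => ∃ u, r v u ∧ steps r n u w

/-- `w` is reachable from `v`. -/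
def reach (r : V → V → Prop) (v w : V) : Prop := ∃ n, steps r n v w

/-- shortest-path distance (number of edges). -/
noncomputable def ddist (r : V → V → Prop) (v w : V) : ℕ := sInf {n | steps r n v w}

open scoped Classical in
/-- set of vertices reachable from `v`. -/
noncomputable def Rset (r : V → V → Prop) [Fintype V] (v : V) : Finset V :=
  univ.filter (fun w => reach r v w)

/-- number of vertices reachable from `v`. -/
noncomputable def rnum (r : V → V → Prop) [Fintype V] (v : V) : ℕ := (Rset r v).card

/-- farness of `v`. -/
noncomputable def farn (r : V → V → Prop) [Fintype V] (v : V) : ℕ :=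
  ∑ w ∈ Rset r v, ddist r v w

open scoped Classical in
/-- ball of radius `d` around `v`. -/
noncomputable def ball (r : V → V → Prop) [Fintype V] (v : V) (d : ℕ) : Finset V :=
  univ.filter (fun w => reach r v w ∧ ddist r v w ≤ d)

/-- number of vertices at distance at most `d` from `v`. -/
noncomputable def nball (r : V → V → Prop) [Fintype V] (v : V) (d : ℕ) : ℕ := (ball r v d).card

open scoped Classical in
/-- set of vertices at distance exactly `d` from `v`. -/
noncomputable def sphere (r : V → V → Prop) [Fintype V] (v : V) (d : ℕ) : Finset V :=
  univ.filter (fun w => reach r v w ∧ ddist r v w = d)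

/-- number of vertices at distance exactly `d` from `v`. -/
noncomputable def gam (r : V → V → Prop) [Fintype V] (v : V) (d : ℕ) : ℕ := (sphere r v d).card

/-- farness of `v` restricted to distance at most `d`. -/
noncomputable def fd (r : V → V → Prop) [Fintype V] (v : V) (d : ℕ) : ℕ :=
  ∑ w ∈ ball r v d, ddist r v w

open scoped Classical in
/-- out-degree of `u`. -/
noncomputable def outdeg (r : V → V → Prop) [Fintype V] (u : V) : ℕ :=
  (univ.filter (fun w => r u w)).card

/-- `gtil r v d` = upper bound γ̃_{d+1}(v) = Σ_{u : dist(v,u)=d} outdeg(u). -/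
noncomputable def gtil (r : V → V → Prop) [Fintype V] (v : V) (d : ℕ) : ℕ :=
  ∑ u ∈ sphere r v d, outdeg r u


open scoped Classical

lemma steps_succ_back (r : V → V → Prop) (n : ℕ) (v w : V) :
    steps r (n+1) v w ↔ ∃ u, steps r n v u ∧ r u w := by
  induction n generalizing v with
  | zero =>
    constructor
    · rintro ⟨u, hvu, hw⟩; exact ⟨v, rfl, hw ▸ hvu⟩
    · rintro ⟨u, hvu, huw⟩; exact ⟨w, hvu ▸ huw, rfl⟩
  | succ n ih =>
    constructor
    · rintro ⟨u, hvu, hw⟩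
      obtain ⟨x, hx, hxw⟩ := (ih u).mp hw
      exact ⟨x, ⟨u, hvu, hx⟩, hxw⟩
    · rintro ⟨u, ⟨x, hvx, hxu⟩, huw⟩
      exact ⟨x, hvx, (ih x).mpr ⟨u, hxu, huw⟩⟩

lemma steps_ddist {r : V → V → Prop} {v w : V} (h : reach r v w) :
    steps r (ddist r v w) v w :=
  Nat.sInf_mem h

lemma ddist_le {r : V → V → Prop} {v w : V} {n : ℕ} (h : steps r n v w) :
    ddist r v w ≤ n :=
  Nat.sInf_le h

lemma sphere_succ_subset [Fintype V] (r : V → V → Prop) (v : V) (d : ℕ) :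
    sphere r v (d+1) ⊆ (sphere r v d).biUnion (fun u => univ.filter (fun w => r u w)) := by
  intro w hw
  simp only [sphere, mem_filter, mem_univ, true_and] at hw
  obtain ⟨hreach, hdist⟩ := hw
  have hsteps : steps r (d+1) v w := by
    have := steps_ddist hreach
    rwa [hdist] at this
  obtain ⟨u, hvu, huw⟩ := (steps_succ_back r d v w).mp hsteps
  have hu_le : ddist r v u ≤ d := ddist_le hvu
  have hu_ge : d ≤ ddist r v u := by
    by_contra h
    push_neg at h
    have h1 : steps r (ddist r v u) v u := steps_ddist ⟨d, hvu⟩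
    have h2 : steps r (ddist r v u + 1) v w :=
      (steps_succ_back r _ v w).mpr ⟨u, h1, huw⟩
    have := ddist_le h2
    omega
  simp only [mem_biUnion, sphere, mem_filter, mem_univ, true_and]
  exact ⟨u, ⟨⟨d, hvu⟩, le_antisymm hu_le hu_ge⟩, huw⟩

lemma gam_succ_le_gtil [Fintype V] (r : V → V → Prop) (v : V) (d : ℕ) :
    gam r v (d+1) ≤ gtil r v d := by
  calc gam r v (d+1) ≤ ((sphere r v d).biUnion (fun u => univ.filter (fun w => r u w))).card :=
        card_le_card (sphere_succ_subset r v d)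
    _ ≤ ∑ u ∈ sphere r v d, (univ.filter (fun w => r u w)).card := card_biUnion_le
    _ = gtil r v d := by rfl

lemma key_nat [Fintype V] (r : V → V → Prop) (v : V) (d : ℕ) :
    fd r v d + (d+2) * (rnum r v - nball r v d) ≤ farn r v + gtil r v d := by
  have hball_sub : ball r v d ⊆ Rset r v := by
    intro w hw
    simp only [ball, mem_filter, mem_univ, true_and] at hw
    simp only [Rset, mem_filter, mem_univ, true_and]
    exact hw.1
  set S : Finset V := Rset r v \ ball r v d with hS
  have hcardS : S.card = rnum r v - nball r v d := card_sdiff_of_subset hball_sub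
  have hsph_sub : sphere r v (d+1) ⊆ S := by
    intro w hw
    simp only [sphere, mem_filter, mem_univ, true_and] at hw
    simp only [hS, mem_sdiff, Rset, ball, mem_filter, mem_univ, true_and]
    exact ⟨hw.1, fun h => by omega⟩
  have hfarn : farn r v = fd r v d + ∑ w ∈ S, ddist r v w := by
    rw [farn, fd, hS, ← sum_sdiff hball_sub, add_comm]
  have hsum : (d+2) * S.card ≤ ∑ w ∈ S, ddist r v w + gam r v (d+1) := by
    have hsplit : ∑ w ∈ S, ddist r v w =
        ∑ w ∈ sphere r v (d+1), ddist r v w + ∑ w ∈ S \ sphere r v (d+1), ddist r v w := by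
      rw [← sum_sdiff hsph_sub, add_comm]
    have h1 : ∑ w ∈ sphere r v (d+1), ddist r v w = (d+1) * gam r v (d+1) := by
      rw [gam, mul_comm, ← smul_eq_mul, ← sum_const]
      apply sum_congr rfl
      intro w hw
      simp only [sphere, mem_filter, mem_univ, true_and] at hw
      simp [hw.2]
    have h2 : ∀ w ∈ S \ sphere r v (d+1), d + 2 ≤ ddist r v w := by
      intro w hw
      rw [mem_sdiff] at hw
      obtain ⟨hwS, hwns⟩ := hw
      rw [hS, mem_sdiff] at hwS
      obtain ⟨hwR, hwnb⟩ := hwS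
      simp only [Rset, mem_filter, mem_univ, true_and] at hwR
      simp only [ball, mem_filter, mem_univ, true_and, not_and, not_le] at hwnb
      simp only [sphere, mem_filter, mem_univ, true_and, not_and] at hwns
      have ha := hwnb hwR
      have hb := hwns hwR
      omega
    have h3 : (d+2) * (S \ sphere r v (d+1)).card ≤ ∑ w ∈ S \ sphere r v (d+1), ddist r v w := by
      calc (d+2) * (S \ sphere r v (d+1)).card = ∑ _w ∈ S \ sphere r v (d+1), (d+2) := by
            rw [sum_const, smul_eq_mul, mul_comm]
        _ ≤ _ := sum_le_sum h2
    have hcard2 : (S \ sphere r v (d+1)).card = S.card - gam r v (d+1) := card_sdiff_of_subset hsph_sub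
    have hle : gam r v (d+1) ≤ S.card := card_le_card hsph_sub
    rw [hsplit, h1]
    rw [hcard2] at h3
    have heq : (d+2) * S.card = (d+2) * (S.card - gam r v (d+1)) + (d+2) * gam r v (d+1) := by
      rw [← Nat.mul_add, Nat.sub_add_cancel hle]
    have h4 : (d+2) * gam r v (d+1) = (d+1) * gam r v (d+1) + gam r v (d+1) := by ring
    linarith
  have hgt := gam_succ_le_gtil r v d
  rw [hfarn, ← hcardS]
  linarith

theorem generalized_closeness_upper_bound [Fintype V] (r : V → V → Prop) (v : V) (d : ℕ)
    (hr : 2 ≤ rnum r v)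
    (hL : 0 < (fd r v d : ℝ) - (gtil r v d : ℝ)
        + (d + 2) * ((rnum r v : ℝ) - (nball r v d : ℝ))) :
    ((rnum r v : ℝ) - 1) ^ 2 / (((Fintype.card V : ℝ) - 1) * (farn r v : ℝ)) ≤
      ((rnum r v : ℝ) - 1) ^ 2 /
        (((Fintype.card V : ℝ) - 1) *
          ((fd r v d : ℝ) - (gtil r v d : ℝ)
            + (d + 2) * ((rnum r v : ℝ) - (nball r v d : ℝ)))) := by
  have hnb : nball r v d ≤ rnum r v := by
    apply card_le_card
    intro w hw
    simp only [ball, mem_filter, mem_univ, true_and] at hw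
    simp only [Rset, mem_filter, mem_univ, true_and]
    exact hw.1
  have hkey := key_nat r v d
  have hkeyR : (fd r v d : ℝ) - (gtil r v d : ℝ)
      + (d + 2) * ((rnum r v : ℝ) - (nball r v d : ℝ)) ≤ (farn r v : ℝ) := by
    have : ((fd r v d + (d+2) * (rnum r v - nball r v d) : ℕ) : ℝ)
        ≤ ((farn r v + gtil r v d : ℕ) : ℝ) := by exact_mod_cast hkey
    push_cast [Nat.cast_sub hnb] at this
    linarith
  have hn : 2 ≤ Fintype.card V := le_trans hr (card_le_card (subset_univ _))
  have hn1 : (0:ℝ) < (Fintype.card V : ℝ) - 1 := by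
    have : (2:ℝ) ≤ (Fintype.card V : ℝ) := by exact_mod_cast hn
    linarith
  apply div_le_div_of_nonneg_left (by positivity) (mul_pos hn1 hL)
  exact mul_le_mul_of_nonneg_left hkeyR hn1.le
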